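/- Let G be a graph with n vertices and minimum degree at least 2, and let 𝒟 be a uniformly random 1-out-directed graph in G (obtained by independently choosing for each vertex a uniformly random neighbour as its unique out-neighbour). Then the expected number of vertices of 𝒟 with in-degree 0 is at least n/4. -/

import Mathlib

/- A *1-out-directed graph* in `G` is encoded by a function `f : V → V` with
`G.Adj u (f u)` for every vertex `u`; a uniformly random one corresponds to a uniformly
random such `f`. A vertex `v` has in-degree `0` iff `f u ≠ v` for all `u`. The expected
number of in-degree-`0` vertices is the average, over all valid `f`, of the number of
such vertices. -/

lemma aux_log_one_sub_ge {x : ℝ} (h0 : 0 ≤ x) (h1 : x ≤ 1/3) :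
    -x - x^2 ≤ Real.log (1 - x) := by
  have hy : (0:ℝ) < 1 - x := by linarith
  rw [Real.le_log_iff_exp_le hy]
  have hE := Real.quadratic_le_exp_of_nonneg (by positivity : (0:ℝ) ≤ x + x^2)
  have hEpos : (0:ℝ) < Real.exp (x + x^2) := Real.exp_pos _
  have h2 : 1 ≤ (1 - x) * Real.exp (x + x^2) := by nlinarith
  have : Real.exp (-x - x^2) = (Real.exp (x + x^2))⁻¹ := by
    rw [← Real.exp_neg]; ring_nf
  rw [this, inv_le_iff_one_le_mul₀ hEpos]
  linarith [mul_comm (1-x) (Real.exp (x+x^2))]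

lemma aux_key_log (d : ℕ) (hd : 2 ≤ d) :
    -Real.log 4 ≤ (d:ℝ) * Real.log (1 - 1/(d:ℝ)) := by
  have hd0 : (0:ℝ) < d := by positivity
  rcases eq_or_lt_of_le hd with h2 | h3
  · subst h2
    have : (1 - 1/((2:ℕ):ℝ)) = (2:ℝ)⁻¹ := by norm_num
    rw [this, Real.log_inv]
    have : Real.log 4 = 2 * Real.log 2 := by
      rw [show (4:ℝ) = 2^2 by norm_num, Real.log_pow]; push_cast; ring
    rw [this]; push_cast; ring_nf; rfl
  · have hd3 : (3:ℕ) ≤ d := h3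
    have hd3' : (3:ℝ) ≤ d := by exact_mod_cast hd3
    have hx0 : (0:ℝ) ≤ 1/(d:ℝ) := by positivity
    have hx1 : 1/(d:ℝ) ≤ 1/3 := by
      apply div_le_div_of_nonneg_left (by norm_num) (by norm_num) hd3'
    have hl := aux_log_one_sub_ge hx0 hx1
    have h4 : (4:ℝ)/3 ≤ Real.log 4 := by
      rw [show (4:ℝ) = 2^2 by norm_num, Real.log_pow]
      have := Real.log_two_gt_d9
      push_cast; nlinarith
    have hq : (d:ℝ) * (-(1/(d:ℝ)) - (1/(d:ℝ))^2) = -1 - 1/(d:ℝ) := by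
      field_simp
    have : (d:ℝ) * Real.log (1 - 1/(d:ℝ)) ≥ (d:ℝ) * (-(1/(d:ℝ)) - (1/(d:ℝ))^2) := by
      apply mul_le_mul_of_nonneg_left _ hd0.le
      convert hl using 2
    have h1d : 1/(d:ℝ) ≤ 1/3 := hx1
    nlinarith

lemma aux_sum_z_ge (V : Type) [Fintype V] [DecidableEq V]
    (G : SimpleGraph V) [DecidableRel G.Adj] (hdeg : ∀ u : V, 2 ≤ G.degree u) :
    (Fintype.card V : ℝ)/4 ≤
      ∑ v : V, ∏ u : V, (1 - (if G.Adj u v then 1 else 0)/(G.degree u : ℝ)) := by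
  set w : V → V → ℝ := fun u v => 1 - (if G.Adj u v then 1 else 0)/(G.degree u : ℝ) with hw
  have hD : ∀ u : V, (2:ℝ) ≤ (G.degree u : ℝ) := fun u => by exact_mod_cast hdeg u
  have hwpos : ∀ u v, 0 < w u v := by
    intro u v
    simp only [hw]
    by_cases h : G.Adj u v
    · rw [if_pos h]
      have h2 : (0:ℝ) < (G.degree u : ℝ) := lt_of_lt_of_le two_pos (hD u)
      have : (1:ℝ)/(G.degree u : ℝ) ≤ 1/2 := by
        apply div_le_div_of_nonneg_left (by norm_num) (by norm_num) (hD u)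
      linarith
    · rw [if_neg h]; norm_num
  set L : V → ℝ := fun v => ∑ u : V, Real.log (w u v) with hL
  have hz : ∀ v, ∏ u : V, w u v = Real.exp (L v) := by
    intro v
    show _ = Real.exp (∑ u : V, Real.log (w u v))
    rw [← Real.log_prod (fun u _ => (hwpos u v).ne'),
      Real.exp_log (Finset.prod_pos (fun u _ => hwpos u v))]
  have hpt : ∀ t : ℝ, (1 + Real.log 4 + t)/4 ≤ Real.exp t := by
    intro t
    have h := Real.add_one_le_exp (t + Real.log 4)
    rw [Real.exp_add, Real.exp_log (by norm_num : (0:ℝ) < 4)] at h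
    linarith
  have hsum : ∑ v : V, (1 + Real.log 4 + L v)/4 ≤ ∑ v : V, ∏ u : V, w u v := by
    apply Finset.sum_le_sum
    intro v _
    rw [hz v]; exact hpt (L v)
  have hLsum : ∑ v : V, L v = ∑ u : V, (G.degree u : ℝ) * Real.log (1 - 1/(G.degree u : ℝ)) := by
    simp only [hL]
    rw [Finset.sum_comm]
    apply Finset.sum_congr rfl
    intro u _
    have : ∀ v : V, Real.log (w u v) = if G.Adj u v then Real.log (1 - 1/(G.degree u : ℝ)) else 0 := by
      intro v
      by_cases h : G.Adj u v
      · simp [hw, h]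
      · simp [hw, h]
    simp_rw [this]
    rw [← Finset.sum_filter, Finset.sum_const, nsmul_eq_mul]
    congr 1
    have : Finset.univ.filter (fun v => G.Adj u v) = G.neighborFinset u := by
      ext v; simp [SimpleGraph.mem_neighborFinset]
    rw [this, G.card_neighborFinset_eq_degree]
  have hLlow : (Fintype.card V : ℝ) * (-Real.log 4) ≤ ∑ v : V, L v := by
    rw [hLsum]
    calc (Fintype.card V : ℝ) * (-Real.log 4) = ∑ _u : V, (-Real.log 4) := by
          rw [Finset.sum_const, nsmul_eq_mul, Finset.card_univ]
      _ ≤ _ := Finset.sum_le_sum (fun u _ => aux_key_log (G.degree u) (hdeg u))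
  have hexp : ∑ v : V, (1 + Real.log 4 + L v)/4
      = ((Fintype.card V : ℝ) * (1 + Real.log 4) + ∑ v : V, L v)/4 := by
    rw [← Finset.sum_div]
    congr 1
    rw [Finset.sum_add_distrib, Finset.sum_const, nsmul_eq_mul, Finset.card_univ]
  rw [hexp] at hsum
  have : (Fintype.card V : ℝ)/4 ≤ ((Fintype.card V : ℝ) * (1 + Real.log 4) + ∑ v : V, L v)/4 := by
    apply div_le_div_of_nonneg_right _ (by norm_num)
    nlinarith [hLlow]
  linarith

lemma aux_card_eq (V : Type) [Fintype V] [DecidableEq V]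
    (G : SimpleGraph V) [DecidableRel G.Adj] :
    (Finset.univ.filter (fun f : V → V => ∀ u : V, G.Adj u (f u))).card
      = ∏ u, G.degree u := by
  have hS : Finset.univ.filter (fun f : V → V => ∀ u : V, G.Adj u (f u))
      = Fintype.piFinset (fun u => G.neighborFinset u) := by
    ext f; simp [SimpleGraph.mem_neighborFinset]
  rw [hS, Fintype.card_piFinset]
  rfl

lemma aux_num_eq (V : Type) [Fintype V] [DecidableEq V]
    (G : SimpleGraph V) [DecidableRel G.Adj] (hdeg : ∀ u : V, 2 ≤ G.degree u) :
    (∑ f ∈ Finset.univ.filter (fun f : V → V => ∀ u : V, G.Adj u (f u)),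
        (({v : V | ∀ u : V, f u ≠ v}.ncard : ℝ)))
      = ∑ v : V, ∏ u : V, ((G.degree u : ℝ) - if G.Adj u v then 1 else 0) := by
  have step1 : ∀ f : V → V, ({v : V | ∀ u : V, f u ≠ v}.ncard : ℕ)
      = ∑ v : V, if (∀ u : V, f u ≠ v) then 1 else 0 := by
    intro f
    have : {v : V | ∀ u : V, f u ≠ v} = ↑(Finset.univ.filter (fun v => ∀ u : V, f u ≠ v)) := by
      ext v; simp
    rw [this, Set.ncard_coe_finset, Finset.card_filter]
  push_cast [step1]
  rw [Finset.sum_comm]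
  congr 1
  ext v
  rw [← Finset.sum_filter, Finset.filter_filter]
  have h2 : Finset.univ.filter (fun f : V → V => (∀ u, G.Adj u (f u)) ∧ ∀ u, f u ≠ v)
      = Fintype.piFinset (fun u => (G.neighborFinset u).erase v) := by
    ext f
    simp only [Fintype.mem_piFinset, Finset.mem_erase, Finset.mem_filter, Finset.mem_univ,
      true_and, SimpleGraph.mem_neighborFinset]
    constructor
    · rintro ⟨h1, h2⟩ u; exact ⟨h2 u, h1 u⟩
    · intro h; exact ⟨fun u => (h u).2, fun u => (h u).1⟩
  rw [Finset.sum_const, h2, Fintype.card_piFinset]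
  rw [nsmul_eq_mul, mul_one, Nat.cast_prod]
  apply Finset.prod_congr rfl
  intro u _
  by_cases h : G.Adj u v
  · rw [Finset.card_erase_of_mem (by simpa [SimpleGraph.mem_neighborFinset])]
    have : 1 ≤ G.degree u := le_trans one_le_two (hdeg u)
    rw [if_pos h, G.card_neighborFinset_eq_degree, Nat.cast_sub this]
    norm_num
  · rw [Finset.erase_eq_of_notMem (by simpa [SimpleGraph.mem_neighborFinset]), if_neg h,
      G.card_neighborFinset_eq_degree]
    norm_num

/-- Let `G` be a graph with `n` vertices and minimum degree at least `2`, and let `𝒟` be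
a uniformly random 1-out-directed graph in `G`. Then the expected number of vertices of
`𝒟` with in-degree `0` is at least `n/4`. -/
theorem expected_number_in_degree_zero
    (V : Type) [Fintype V] [DecidableEq V] (G : SimpleGraph V) [DecidableRel G.Adj]
    (hdeg : ∀ u : V, 2 ≤ G.degree u) :
    (Fintype.card V : ℝ) / 4 ≤
      (∑ f ∈ Finset.univ.filter (fun f : V → V => ∀ u : V, G.Adj u (f u)),
          (({v : V | ∀ u : V, f u ≠ v}.ncard : ℝ))) /
        ((Finset.univ.filter (fun f : V → V => ∀ u : V, G.Adj u (f u))).card : ℝ) := by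
  rw [aux_num_eq V G hdeg, aux_card_eq V G, Nat.cast_prod]
  have hDpos : ∀ u : V, (0:ℝ) < (G.degree u : ℝ) := by
    intro u
    have : 0 < G.degree u := lt_of_lt_of_le two_pos (hdeg u)
    exact_mod_cast this
  have hDen : (0:ℝ) < ∏ u : V, (G.degree u : ℝ) :=
    Finset.prod_pos (fun u _ => hDpos u)
  rw [le_div_iff₀ hDen]
  have hfact : ∀ v : V, ∏ u : V, ((G.degree u : ℝ) - if G.Adj u v then 1 else 0)
      = (∏ u : V, (G.degree u : ℝ))
        * ∏ u : V, (1 - (if G.Adj u v then 1 else 0)/(G.degree u : ℝ)) := by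
    intro v
    rw [← Finset.prod_mul_distrib]
    apply Finset.prod_congr rfl
    intro u _
    rw [mul_sub, mul_one, mul_div_cancel₀ _ (hDpos u).ne']
  calc (Fintype.card V : ℝ) / 4 * ∏ u : V, (G.degree u : ℝ)
      ≤ (∑ v : V, ∏ u : V, (1 - (if G.Adj u v then 1 else 0)/(G.degree u : ℝ)))
          * ∏ u : V, (G.degree u : ℝ) := by
        exact mul_le_mul_of_nonneg_right (aux_sum_z_ge V G hdeg) hDen.le
    _ = ∑ v : V, ∏ u : V, ((G.degree u : ℝ) - if G.Adj u v then 1 else 0) := by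
        rw [Finset.sum_mul]
        apply Finset.sum_congr rfl
        intro v _
        rw [hfact v, mul_comm]
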